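/- For s ≥ 1, let M_s be the s×s matrix whose entry in row m and column i (for 1 ≤ m, i ≤ s) is a(s, m−1, i) := Σ_{j≥0} C(s−i, m−1−j)·C(i, j)·C(s−j, m−1). Then det(M_s) ≠ 0 for every s ≥ 1; in fact |det(M_s)| = 1, since det(M₁) = 1 and det(M_s) = ±det(M_{s−1}). -/

import Mathlib

/-- `a(s, m, i) = Σ_{j ≥ 0} C(s−i, m−j)·C(i, j)·C(s−j, m)` (the terms with `j > m` or
`j > i` vanish under the convention that out-of-range binomial coefficients are zero,
so the sum may be taken over `j ∈ {0, …, m}`). -/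
def aCoeff (s m i : ℕ) : ℕ :=
  ∑ j ∈ Finset.range (m + 1),
    Nat.choose (s - i) (m - j) * Nat.choose i j * Nat.choose (s - j) m

/-- The `s × s` matrix `M_s` whose entry in row `m` and column `i` (for `1 ≤ m, i ≤ s`,
here realized with `0`-based indices, so row `m` corresponds to `m−1` and column `i` to
`i−1`) is `a(s, m−1, i)`. -/
def Mmat (s : ℕ) : Matrix (Fin s) (Fin s) ℤ :=
  Matrix.of fun m i => (aCoeff s m.val (i.val + 1) : ℤ)

open Finset Polynomial

noncomputable def binPoly (k : ℕ) : Polynomial ℚ := C (((Nat.factorial k) : ℚ)⁻¹) * descPochhammer ℚ k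

lemma binPoly_eval (k i : ℕ) : (binPoly k).eval (i : ℚ) = (i.choose k : ℚ) := by
  have h : (((Nat.factorial k) : ℚ)) ≠ 0 := by positivity
  simp only [binPoly, eval_mul, eval_C, descPochhammer_eval_eq_descFactorial,
    Nat.descFactorial_eq_factorial_mul_choose]
  push_cast
  field_simp

lemma binPoly_natDegree (k : ℕ) : (binPoly k).natDegree = k := by
  have h : (((Nat.factorial k) : ℚ)⁻¹) ≠ 0 := by positivity
  rw [binPoly, natDegree_C_mul h, descPochhammer_natDegree]

lemma binPoly_leadingCoeff (k : ℕ) : (binPoly k).leadingCoeff = ((Nat.factorial k) : ℚ)⁻¹ := by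
  rw [binPoly, leadingCoeff_mul, leadingCoeff_C, (monic_descPochhammer ℚ k).leadingCoeff, mul_one]

lemma binPoly_coeff_self (k : ℕ) : (binPoly k).coeff k = ((Nat.factorial k) : ℚ)⁻¹ := by
  have := binPoly_leadingCoeff k
  rwa [leadingCoeff, binPoly_natDegree] at this

/-- Newton-basis expansion of a polynomial of degree ≤ m. -/

lemma exists_binPoly_expansion (m : ℕ) (P : Polynomial ℚ) (hP : P.natDegree ≤ m) :
    ∃ c : ℕ → ℚ, c m = ((Nat.factorial m) : ℚ) * P.coeff m ∧
      P = ∑ k ∈ range (m + 1), C (c k) * binPoly k := by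
  induction m generalizing P with
  | zero =>
    refine ⟨fun _ => P.coeff 0, by simp, ?_⟩
    rw [Polynomial.eq_C_of_natDegree_le_zero hP]
    simp [binPoly, descPochhammer_zero]
  | succ m ih =>
    set d : ℚ := ((Nat.factorial (m+1)) : ℚ) * P.coeff (m+1) with hd
    set P' : Polynomial ℚ := P - C d * binPoly (m+1) with hP'
    have hfac : ((Nat.factorial (m+1)) : ℚ) ≠ 0 := by positivity
    have hdeg : P'.natDegree ≤ m := by
      rw [natDegree_le_iff_coeff_eq_zero]
      intro j hj
      rcases eq_or_lt_of_le (Nat.succ_le_of_lt hj) with h | h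
      · -- j = m+1
        rw [hP', coeff_sub, coeff_C_mul, ← h, binPoly_coeff_self, hd]
        field_simp
        simp
      · rw [hP', coeff_sub, coeff_C_mul]
        rw [coeff_eq_zero_of_natDegree_lt (lt_of_le_of_lt hP h),
          coeff_eq_zero_of_natDegree_lt (lt_of_le_of_lt (binPoly_natDegree (m+1)).le h)]
        ring
    obtain ⟨c', hc'm, hc'⟩ := ih P' hdeg
    refine ⟨fun k => if k = m + 1 then d else c' k, by simp [hd], ?_⟩
    rw [Finset.sum_range_succ]
    have : ∑ k ∈ range (m + 1), C (if k = m + 1 then d else c' k) * binPoly k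
        = ∑ k ∈ range (m + 1), C (c' k) * binPoly k := by
      refine Finset.sum_congr rfl fun k hk => ?_
      have hk' : k ≠ m + 1 := by have := Finset.mem_range.mp hk; omega
      rw [if_neg hk']
    beta_reduce
    rw [this, if_pos rfl, ← hc', hP']
    ring

lemma fwdDiff_iter_cast (f : ℕ → ℤ) (n y : ℕ) :
    (fwdDiff 1)^[n] (fun i => (f i : ℚ)) y = (((fwdDiff 1)^[n] f y : ℤ) : ℚ) := by
  rw [fwdDiff_iter_eq_sum_shift, fwdDiff_iter_eq_sum_shift]
  push_cast [zsmul_eq_mul]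
  norm_num

lemma fwdDiff_iter_congr {G : Type*} [AddCommGroup G] {f1 f2 : ℕ → G} (n : ℕ)
    (h : ∀ t ≤ n, f1 t = f2 t) : (fwdDiff 1)^[n] f1 0 = (fwdDiff 1)^[n] f2 0 := by
  rw [fwdDiff_iter_eq_sum_shift, fwdDiff_iter_eq_sum_shift]
  refine Finset.sum_congr rfl fun k hk => ?_
  have hk' : k ≤ n := Nat.lt_succ_iff.mp (Finset.mem_range.mp hk)
  have : (0 : ℕ) + k • 1 = k := by simp
  rw [this, h _ hk']

lemma fwdDiff_iter_choose_zero_rat (j k : ℕ) :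
    (fwdDiff 1)^[j] (fun i : ℕ => (i.choose k : ℚ)) 0 = if j = k then 1 else 0 := by
  have : (fun i : ℕ => (i.choose k : ℚ)) = fun i : ℕ => ((((i.choose k : ℤ)) : ℚ)) := by
    push_cast; rfl
  rw [this, fwdDiff_iter_cast, fwdDiff_iter_choose_zero]
  split <;> norm_num

lemma fwdDiff_iter_eval_poly (P : Polynomial ℚ) (m j : ℕ) (hP : P.natDegree ≤ m) (hj : m ≤ j) :
    (fwdDiff 1)^[j] (fun i : ℕ => P.eval (i : ℚ)) 0
      = if j = m then ((Nat.factorial m) : ℚ) * P.coeff m else 0 := by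
  obtain ⟨c, hcm, hPeq⟩ := exists_binPoly_expansion m P hP
  have hfun : (fun i : ℕ => P.eval (i : ℚ))
      = ∑ k ∈ range (m + 1), c k • (fun i : ℕ => (i.choose k : ℚ)) := by
    funext i
    rw [hPeq]
    simp only [eval_finset_sum, eval_mul, eval_C, Finset.sum_apply, Pi.smul_apply,
      smul_eq_mul, binPoly_eval]
  rw [hfun, fwdDiff_iter_finset_sum]
  simp only [Finset.sum_apply, fwdDiff_iter_const_smul, Pi.smul_apply,
    fwdDiff_iter_choose_zero_rat, smul_eq_mul, mul_ite, mul_one, mul_zero]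
  rw [Finset.sum_ite_eq (range (m+1)) j c]
  by_cases h : j = m
  · subst h
    simp [Finset.mem_range, hcm]
  · have : j ∉ range (m + 1) := by simp [Finset.mem_range]; omega
    simp [this, h]

lemma comp_lin_natDegree (k : ℕ) (q : Polynomial ℚ) (hq : q.natDegree = 1) :
    ((binPoly k).comp q).natDegree = k := by
  rw [natDegree_comp, binPoly_natDegree, hq, mul_one]

lemma comp_lin_leadingCoeff (k : ℕ) (q : Polynomial ℚ) (hq : q.natDegree = 1) :
    ((binPoly k).comp q).leadingCoeff = (Nat.factorial k : ℚ)⁻¹ * q.leadingCoeff ^ k := by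
  rw [leadingCoeff_comp (by rw [hq]; norm_num), binPoly_leadingCoeff, binPoly_natDegree]

lemma sub_X_natDegree (a : ℚ) : (C a - X).natDegree = 1 := by
  have : C a - X = -(X - C a) := by ring
  rw [this, natDegree_neg, natDegree_X_sub_C]

lemma sub_X_leadingCoeff (a : ℚ) : (C a - X).leadingCoeff = -1 := by
  have : C a - X = -(X - C a) := by ring
  rw [this, leadingCoeff_neg, (monic_X_sub_C a).leadingCoeff]

noncomputable def aPoly (s m : ℕ) : Polynomial ℚ :=
  ∑ t ∈ range (m + 1), C (((s - t).choose m : ℚ)) *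
    ((binPoly (m - t)).comp (C (((s - 1 : ℕ)) : ℚ) - X) * (binPoly t).comp (X + C 1))

lemma aPoly_natDegree (s m : ℕ) : (aPoly s m).natDegree ≤ m := by
  refine natDegree_sum_le_of_forall_le _ _ fun t ht => ?_
  refine (natDegree_C_mul_le _ _).trans ?_
  refine (natDegree_mul_le).trans ?_
  rw [comp_lin_natDegree _ _ (sub_X_natDegree _), comp_lin_natDegree _ _ (natDegree_X_add_C 1)]
  have : t ≤ m := Nat.lt_succ_iff.mp (Finset.mem_range.mp ht)
  omega

lemma aPoly_eval (s m i : ℕ) (hi : i ≤ s - 1) :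
    (aPoly s m).eval (i : ℚ) = (aCoeff s m (i + 1) : ℚ) := by
  rw [aPoly, aCoeff, eval_finset_sum, Nat.cast_sum]
  refine Finset.sum_congr rfl fun t ht => ?_
  rw [eval_mul, eval_C, eval_mul, eval_comp, eval_comp]
  simp only [eval_sub, eval_add, eval_C, eval_X]
  have h1 : ((s - 1 : ℕ) : ℚ) - (i : ℚ) = ((s - 1 - i : ℕ) : ℚ) := by
    rw [Nat.cast_sub hi]
  have h2 : (i : ℚ) + 1 = ((i + 1 : ℕ) : ℚ) := by push_cast; ring
  rw [h1, h2, binPoly_eval, binPoly_eval]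
  have h3 : s - 1 - i = s - (i + 1) := by omega
  rw [h3]
  push_cast
  ring

lemma aPoly_coeff (s m : ℕ) : (aPoly s m).coeff m
    = ∑ t ∈ range (m + 1), (((s - t).choose m : ℚ)) *
        ((-1) ^ (m - t) * ((Nat.factorial (m - t) : ℚ)⁻¹ * (Nat.factorial t : ℚ)⁻¹)) := by
  rw [aPoly, finset_sum_coeff]
  refine Finset.sum_congr rfl fun t ht => ?_
  have htm : t ≤ m := Nat.lt_succ_iff.mp (Finset.mem_range.mp ht)
  rw [coeff_C_mul]
  congr 1
  set A := (binPoly (m - t)).comp (C (((s - 1 : ℕ)) : ℚ) - X) with hA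
  set B := (binPoly t).comp (X + C (1:ℚ)) with hB
  have hdA : A.natDegree = m - t := comp_lin_natDegree (m - t) _ (sub_X_natDegree _)
  have hdB : B.natDegree = t := comp_lin_natDegree t _ (natDegree_X_add_C 1)
  have hm : m = A.natDegree + B.natDegree := by rw [hdA, hdB]; omega
  rw [hm, coeff_mul_degree_add_degree, hdA, hdB, Nat.add_sub_cancel, hA, hB,
    comp_lin_leadingCoeff _ _ (sub_X_natDegree _),
    comp_lin_leadingCoeff _ _ (natDegree_X_add_C 1),
    sub_X_leadingCoeff]
  have : (X + C (1:ℚ)).leadingCoeff = 1 := (monic_X_add_C 1).leadingCoeff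
  rw [this, one_pow, mul_one]
  ring

lemma offdiag (s m k : ℕ) (hk : k + 1 ≤ s) (hmk : m < k) :
    (fwdDiff 1)^[k] (fun i : ℕ => (aCoeff s m (i + 1) : ℤ)) 0 = 0 := by
  have hq : (fwdDiff 1)^[k] (fun i : ℕ => ((aCoeff s m (i + 1) : ℤ) : ℚ)) 0 = 0 := by
    have hcg : (fwdDiff 1)^[k] (fun i : ℕ => ((aCoeff s m (i + 1) : ℤ) : ℚ)) 0
        = (fwdDiff 1)^[k] (fun i : ℕ => (aPoly s m).eval (i : ℚ)) 0 := by
      refine fwdDiff_iter_congr k fun t ht => ?_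
      rw [aPoly_eval s m t (by omega)]
      push_cast; ring
    rw [hcg, fwdDiff_iter_eval_poly _ m k (aPoly_natDegree s m) (by omega),
      if_neg (by omega)]
  rw [fwdDiff_iter_cast] at hq
  exact_mod_cast hq

lemma choose_diff (s m : ℕ) (hm : m ≤ s) :
    (fwdDiff 1)^[m] (fun t : ℕ => (((s - t).choose m : ℕ) : ℚ)) 0 = (-1) ^ m := by
  set R : Polynomial ℚ := (binPoly m).comp (C ((s : ℕ) : ℚ) - X) with hR
  have hdR : R.natDegree = m := comp_lin_natDegree m _ (sub_X_natDegree _)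
  have hcg : (fwdDiff 1)^[m] (fun t : ℕ => (((s - t).choose m : ℕ) : ℚ)) 0
      = (fwdDiff 1)^[m] (fun t : ℕ => R.eval (t : ℚ)) 0 := by
    refine fwdDiff_iter_congr m fun t ht => ?_
    rw [hR, eval_comp]
    simp only [eval_sub, eval_C, eval_X]
    have : ((s : ℕ) : ℚ) - (t : ℚ) = ((s - t : ℕ) : ℚ) := by
      rw [Nat.cast_sub (by omega)]
    rw [this, binPoly_eval]
  have hcoeff : R.coeff m = (Nat.factorial m : ℚ)⁻¹ * (-1) ^ m := by
    have : R.coeff m = R.leadingCoeff := by rw [leadingCoeff, hdR]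
    rw [this, hR, comp_lin_leadingCoeff _ _ (sub_X_natDegree _), sub_X_leadingCoeff]
  rw [hcg, fwdDiff_iter_eval_poly R m m hdR.le le_rfl, if_pos rfl, hcoeff]
  have hfac : ((Nat.factorial m : ℚ)) ≠ 0 := by positivity
  field_simp

lemma diag (s m : ℕ) (hm : m + 1 ≤ s) :
    (fwdDiff 1)^[m] (fun i : ℕ => (aCoeff s m (i + 1) : ℤ)) 0 = (-1) ^ m := by
  have hq : (fwdDiff 1)^[m] (fun i : ℕ => ((aCoeff s m (i + 1) : ℤ) : ℚ)) 0 = (-1) ^ m := by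
    have hcg : (fwdDiff 1)^[m] (fun i : ℕ => ((aCoeff s m (i + 1) : ℤ) : ℚ)) 0
        = (fwdDiff 1)^[m] (fun i : ℕ => (aPoly s m).eval (i : ℚ)) 0 := by
      refine fwdDiff_iter_congr m fun t ht => ?_
      rw [aPoly_eval s m t (by omega)]
      push_cast; ring
    rw [hcg, fwdDiff_iter_eval_poly _ m m (aPoly_natDegree s m) le_rfl, if_pos rfl, aPoly_coeff,
      Finset.mul_sum]
    have hstep : ∀ t ∈ range (m + 1),
        (Nat.factorial m : ℚ) * ((((s - t).choose m : ℕ) : ℚ) *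
          ((-1) ^ (m - t) * ((Nat.factorial (m - t) : ℚ)⁻¹ * (Nat.factorial t : ℚ)⁻¹)))
        = ((-1) ^ (m - t) * ((m.choose t : ℕ) : ℚ)) * (((s - t).choose m : ℕ) : ℚ) := by
      intro t ht
      have htm : t ≤ m := Nat.lt_succ_iff.mp (Finset.mem_range.mp ht)
      have h1 : ((m.choose t : ℕ) : ℚ) = (Nat.factorial m : ℚ) /
          ((Nat.factorial t : ℚ) * (Nat.factorial (m - t) : ℚ)) := Nat.cast_choose ℚ htm
      have h2 : ((Nat.factorial t : ℚ)) ≠ 0 := by positivity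
      have h3 : ((Nat.factorial (m - t) : ℚ)) ≠ 0 := by positivity
      rw [h1]
      field_simp
    rw [Finset.sum_congr rfl hstep]
    have hsum : ∑ t ∈ range (m + 1),
        ((-1) ^ (m - t) * ((m.choose t : ℕ) : ℚ)) * (((s - t).choose m : ℕ) : ℚ)
        = (fwdDiff 1)^[m] (fun t : ℕ => (((s - t).choose m : ℕ) : ℚ)) 0 := by
      rw [fwdDiff_iter_eq_sum_shift]
      refine Finset.sum_congr rfl fun t ht => ?_
      have : (0 : ℕ) + t • 1 = t := by simp
      rw [this, zsmul_eq_mul]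
      push_cast
      ring
    rw [hsum, choose_diff s m (by omega)]
  rw [fwdDiff_iter_cast] at hq
  exact_mod_cast hq

def Tmat (s : ℕ) : Matrix (Fin s) (Fin s) ℤ :=
  Matrix.of fun m k => (fwdDiff 1)^[k.val] (fun i : ℕ => (aCoeff s m.val (i + 1) : ℤ)) 0

def Umat (s : ℕ) : Matrix (Fin s) (Fin s) ℤ :=
  Matrix.of fun k i => (Nat.choose i.val k.val : ℤ)

lemma Mmat_eq (s : ℕ) : Mmat s = Tmat s * Umat s := by
  ext m i
  rw [Matrix.mul_apply]
  simp only [Mmat, Tmat, Umat, Matrix.of_apply]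
  set g : ℕ → ℤ := fun j : ℕ => (aCoeff s m.val (j + 1) : ℤ) with hg
  have newton := shift_eq_sum_fwdDiff_iter (1 : ℕ) g i.val 0
  have h0 : (0 : ℕ) + i.val • 1 = i.val := by simp
  rw [h0] at newton
  have lhs : (aCoeff s m.val (i.val + 1) : ℤ) = g i.val := rfl
  rw [lhs, newton, Fin.sum_univ_eq_sum_range (fun k => (fwdDiff 1)^[k] g 0 * ((i.val).choose k : ℤ)) s]
  have hext : ∑ k ∈ range s, (i.val).choose k • (fwdDiff 1)^[k] g 0
      = ∑ k ∈ range (i.val + 1), (i.val).choose k • (fwdDiff 1)^[k] g 0 := by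
    symm
    refine Finset.sum_subset (by rw [Finset.range_subset_range]; exact i.isLt) ?_
    intro k _ hk2
    have hik : i.val < k := by
      simp only [Finset.mem_range, not_lt] at hk2
      omega
    rw [Nat.choose_eq_zero_of_lt hik, zero_smul]
  rw [← hext]
  refine Finset.sum_congr rfl fun k hk => ?_
  rw [nsmul_eq_mul]
  push_cast
  ring

lemma Tmat_triangular (s : ℕ) : (Tmat s).BlockTriangular OrderDual.toDual := by
  intro m k h
  exact offdiag s m.val k.val k.isLt (by exact h)

lemma Umat_triangular (s : ℕ) : (Umat s).BlockTriangular id := by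
  intro k i h
  simp only [Umat, Matrix.of_apply]
  rw [Nat.choose_eq_zero_of_lt (by exact h)]
  rfl

/-- `det M_s ≠ 0` for every `s ≥ 1`; in fact `|det M_s| = 1`. -/
theorem Mmat_det_ne_zero (s : ℕ) (hs : 1 ≤ s) :
    (Mmat s).det ≠ 0 ∧ (Mmat s).det.natAbs = 1 := by
  have hdet : (Mmat s).det.natAbs = 1 := by
    rw [Mmat_eq, Matrix.det_mul, Int.natAbs_mul]
    have hU : (Umat s).det = 1 := by
      rw [Matrix.det_of_upperTriangular (Umat_triangular s)]
      simp [Umat]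
    have hT : (Tmat s).det.natAbs = 1 := by
      rw [Matrix.det_of_lowerTriangular _ (Tmat_triangular s)]
      have : ∏ k : Fin s, Tmat s k k = ∏ k : Fin s, (-1 : ℤ) ^ (k : ℕ) := by
        refine Finset.prod_congr rfl fun k _ => ?_
        rw [Tmat, Matrix.of_apply, diag s k.val k.isLt]
      rw [this, Finset.prod_pow_eq_pow_sum]
      rw [Int.natAbs_pow]
      simp
    rw [hU, hT]
    simp
  exact ⟨fun h => by simp [h] at hdet, hdet⟩
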